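/- (Efficiency hierarchy, Eq. 7c) Let q satisfy 2√2/3 < q < 1. Then the reduced efficiency η(x) = −x(x + q)/(q·x + 1), evaluated at the six optimal force ratios, satisfies the strict chain η(x_mdf) < η(x_MPO) < η(x_MPη) < η(x_MΩ) < η(x_MEF) < η(x_Mη), where η(x_mdf) = 0. -/
import Mathlib


/-- Optimal force ratio for minimum dissipation function: `x_mdf = −q`. -/
noncomputable def xmdf (q : ℝ) : ℝ := -q

/-- Optimal force ratio for maximum power output: `x_MPO = −q/2`. -/
noncomputable def xMPO (q : ℝ) : ℝ := -q / 2

/-- Optimal force ratio for maximum efficiency: `x_Mη = −q/(1 + √(1 − q²))`. -/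
noncomputable def xMeta (q : ℝ) : ℝ := -q / (1 + Real.sqrt (1 - q ^ 2))

/-- Optimal force ratio for maximum ecological function: `x_MEF = −3q/4`. -/
noncomputable def xMEF (q : ℝ) : ℝ := -(3 * q) / 4

/-- Optimal force ratio for maximum omega function:
`x_MΩ = −q·(4 − q² + 4√(1 − q²))/(4·(1 + √(1 − q²))²)`. -/
noncomputable def xMOmega (q : ℝ) : ℝ :=
  -(q * (4 - q ^ 2 + 4 * Real.sqrt (1 - q ^ 2))) / (4 * (1 + Real.sqrt (1 - q ^ 2)) ^ 2)

/-- Optimal force ratio for maximum efficient power: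
`x_MPη = −(4 + q² − √(16 − 16q² + q⁴))/(6q)`. -/
noncomputable def xMPeta (q : ℝ) : ℝ :=
  -(4 + q ^ 2 - Real.sqrt (16 - 16 * q ^ 2 + q ^ 4)) / (6 * q)

/-- Reduced efficiency `η(x) = −x(x + q)/(q·x + 1)`. -/
noncomputable def effX (q x : ℝ) : ℝ := -(x * (x + q)) / (q * x + 1)

/-- If `(X − Y)(X + Y) = R > 0` and `0 < X`, then `0 < X + Y`. -/
lemma aux_sum_pos (X Y R : ℝ) (hX : 0 < X) (hR : 0 < R) (hk : (X - Y) * (X + Y) = R) :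
    0 < X + Y := by
  rcases le_or_gt (X + Y) 0 with h | h
  · exfalso
    have h2 : 0 < X - Y := by linarith
    nlinarith [mul_nonpos_of_nonneg_of_nonpos h2.le h]
  · exact h

set_option maxHeartbeats 2000000 in
/-- (Efficiency hierarchy, Eq. 7c) For `2√2/3 < q < 1`, the reduced efficiency evaluated
at the six optimal force ratios satisfies
`η(x_mdf) < η(x_MPO) < η(x_MPη) < η(x_MΩ) < η(x_MEF) < η(x_Mη)`, with `η(x_mdf) = 0`. -/
theorem efficiency_hierarchy (q : ℝ) (hq0 : 2 * Real.sqrt 2 / 3 < q) (hq1 : q < 1) :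
    effX q (xmdf q) = 0 ∧
    effX q (xmdf q) < effX q (xMPO q) ∧
    effX q (xMPO q) < effX q (xMPeta q) ∧
    effX q (xMPeta q) < effX q (xMOmega q) ∧
    effX q (xMOmega q) < effX q (xMEF q) ∧
    effX q (xMEF q) < effX q (xMeta q) := by
  have hsqrt2 : Real.sqrt 2 ^ 2 = 2 := Real.sq_sqrt (by norm_num)
  have hsqrt2pos : (0:ℝ) < Real.sqrt 2 := Real.sqrt_pos.2 (by norm_num)
  have hqpos : 0 < q := lt_trans (by positivity) hq0
  have hq89 : 8/9 < q ^ 2 := by nlinarith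
  have hq2lt : q ^ 2 < 1 := by nlinarith
  obtain ⟨s, hs⟩ : ∃ s, s = Real.sqrt (1 - q ^ 2) := ⟨_, rfl⟩
  have hs2 : s ^ 2 = 1 - q ^ 2 := by rw [hs]; exact Real.sq_sqrt (by nlinarith)
  have hs0 : 0 < s := by rw [hs]; exact Real.sqrt_pos.2 (by nlinarith)
  have hs3 : s < 1/3 := by nlinarith
  have hq2 : q ^ 2 = 1 - s ^ 2 := by linarith
  obtain ⟨t, ht⟩ : ∃ t, t = Real.sqrt (16 - 16 * q ^ 2 + q ^ 4) := ⟨_, rfl⟩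
  have ht2 : t ^ 2 = 16 - 16 * q ^ 2 + q ^ 4 := by rw [ht]; exact Real.sq_sqrt (by nlinarith)
  have ht0 : 0 < t := by rw [ht]; exact Real.sqrt_pos.2 (by nlinarith)
  have ht2' : t ^ 2 = s ^ 4 + 14 * s ^ 2 + 1 := by
    linear_combination ht2 + (q ^ 2 - s ^ 2 - 15) * hq2
  have hqne : q ≠ 0 := ne_of_gt hqpos
  have h1s : (0:ℝ) < 1 + s := by linarith
  have h1sne : (1:ℝ) + s ≠ 0 := ne_of_gt h1s
  -- closed forms
  have E2 : effX q (xMPO q) = q ^ 2 / (4 - 2 * q ^ 2) := by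
    unfold effX xMPO
    rw [div_eq_div_iff (by nlinarith) (by nlinarith)]
    ring
  have E5 : effX q (xMEF q) = 3 * q ^ 2 / (16 - 12 * q ^ 2) := by
    unfold effX xMEF
    rw [div_eq_div_iff (by nlinarith) (by nlinarith)]
    ring
  have E3 : effX q (xMPeta q) =
      ((4 + q ^ 2 - t) * (6 * q ^ 2 - (4 + q ^ 2 - t))) / (6 * q ^ 2 * (2 - q ^ 2 + t)) := by
    unfold effX xMPeta
    rw [← ht]
    have hd : q * (-(4 + q ^ 2 - t) / (6 * q)) + 1 ≠ 0 := by
      have he : q * (-(4 + q ^ 2 - t) / (6 * q)) + 1 = (2 - q ^ 2 + t) / 6 := by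
        field_simp; ring
      rw [he]
      have h1 : 0 < 2 - q ^ 2 + t := by nlinarith
      positivity
    rw [div_eq_div_iff hd (ne_of_gt (mul_pos (by positivity : (0:ℝ) < 6 * q ^ 2) (by nlinarith : (0:ℝ) < 2 - q ^ 2 + t)))]
    field_simp
    ring
  have E6 : effX q (xMeta q) = (q ^ 2 * s) / ((1 + s) * (1 + s - q ^ 2)) := by
    unfold effX xMeta
    rw [← hs]
    have hd : q * (-q / (1 + s)) + 1 ≠ 0 := by
      have : q * (-q / (1 + s)) + 1 = (1 + s - q ^ 2) / (1 + s) := by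
        field_simp; ring
      rw [this]
      have h1 : 0 < 1 + s - q ^ 2 := by nlinarith
      positivity
    rw [div_eq_div_iff hd (by nlinarith : ((1:ℝ) + s) * (1 + s - q ^ 2) ≠ 0)]
    field_simp
    ring
  have E4 : effX q (xMOmega q) =
      (q ^ 2 * (4 - q ^ 2 + 4 * s) * (4 * s + 4 * s ^ 2 + q ^ 2)) /
        (4 * (1 + s) ^ 2 * (4 * (1 + s) ^ 2 - q ^ 2 * (4 - q ^ 2 + 4 * s))) := by
    unfold effX xMOmega
    rw [← hs]
    have hfac : 4 * (1 + s) ^ 2 - q ^ 2 * (4 - q ^ 2 + 4 * s) = (1 + s) ^ 4 := by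
      linear_combination (q ^ 2 - s ^ 2 - 4 * s - 3) * hq2
    have hd : q * (-(q * (4 - q ^ 2 + 4 * s)) / (4 * (1 + s) ^ 2)) + 1 ≠ 0 := by
      have : q * (-(q * (4 - q ^ 2 + 4 * s)) / (4 * (1 + s) ^ 2)) + 1 =
          (4 * (1 + s) ^ 2 - q ^ 2 * (4 - q ^ 2 + 4 * s)) / (4 * (1 + s) ^ 2) := by
        field_simp; ring
      rw [this, hfac]
      positivity
    have hd2 : (4 * (1 + s) ^ 2 * (4 * (1 + s) ^ 2 - q ^ 2 * (4 - q ^ 2 + 4 * s))) ≠ 0 := by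
      rw [hfac]; positivity
    rw [div_eq_div_iff hd hd2]
    field_simp
    ring
  -- denominator positivity
  have hd2 : (0:ℝ) < 4 - 2 * q ^ 2 := by nlinarith
  have hd3 : (0:ℝ) < 6 * q ^ 2 * (2 - q ^ 2 + t) := by nlinarith
  have hfac : 4 * (1 + s) ^ 2 - q ^ 2 * (4 - q ^ 2 + 4 * s) = (1 + s) ^ 4 := by
    linear_combination (q ^ 2 - s ^ 2 - 4 * s - 3) * hq2
  have hd4 : (0:ℝ) < 4 * (1 + s) ^ 2 * (4 * (1 + s) ^ 2 - q ^ 2 * (4 - q ^ 2 + 4 * s)) := by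
    rw [hfac]; positivity
  have hd5 : (0:ℝ) < 16 - 12 * q ^ 2 := by nlinarith
  have hd6 : (0:ℝ) < (1 + s) * (1 + s - q ^ 2) := by nlinarith
  -- positivity of the B-expressions
  -- B23 = a2 + b2 * t
  have hB23 : 0 < (2 - 66*s^2 - 66*s^4 + 2*s^6) + (2 + 28*s^2 + 2*s^4) * t := by
    have hb2 : (0:ℝ) < (2 + 28*s^2 + 2*s^4) * t := by positivity
    have hR : (0:ℝ) < 432 * s^2 * (1 - s^2)^4 := by
      have h1 : (0:ℝ) < 1 - s^2 := by nlinarith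
      positivity
    have hk : ((2 + 28*s^2 + 2*s^4) * t - (2 - 66*s^2 - 66*s^4 + 2*s^6)) *
        ((2 + 28*s^2 + 2*s^4) * t + (2 - 66*s^2 - 66*s^4 + 2*s^6)) =
        432 * s^2 * (1 - s^2)^4 := by
      linear_combination (2 + 28*s^2 + 2*s^4)^2 * ht2'
    have := aux_sum_pos _ _ _ hb2 hR hk
    linarith
  -- B34 = a34 + b34 * t
  have hP : 0 < 720 + 1728*s - 7776*s^2 - 5184*s^3 + 24624*s^4 + 3456*s^5 - 35136*s^6
      + 3456*s^7 + 24624*s^8 - 5184*s^9 - 7776*s^10 + 1728*s^11 + 720*s^12 := by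
    have hb2 : s^2 ≤ s * (1/3) := by nlinarith
    have hb3 : s^3 ≤ s^2 * (1/3) := by nlinarith
    have hb6 : s^6 ≤ s^2 * (1/81) := by
      have h : s^4 ≤ (1/3:ℝ)^4 := pow_le_pow_left₀ hs0.le hs3.le 4
      calc s^6 = s^2 * s^4 := by ring
        _ ≤ s^2 * (1/3:ℝ)^4 := mul_le_mul_of_nonneg_left h (sq_nonneg s)
        _ = s^2 * (1/81) := by norm_num
    have hb9 : s^9 ≤ s^2 * (1/2187) := by
      have h : s^7 ≤ (1/3:ℝ)^7 := pow_le_pow_left₀ hs0.le hs3.le 7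
      calc s^9 = s^2 * s^7 := by ring
        _ ≤ s^2 * (1/3:ℝ)^7 := mul_le_mul_of_nonneg_left h (sq_nonneg s)
        _ = s^2 * (1/2187) := by norm_num
    have hb10 : s^10 ≤ s^2 * (1/6561) := by
      have h : s^8 ≤ (1/3:ℝ)^8 := pow_le_pow_left₀ hs0.le hs3.le 8
      calc s^10 = s^2 * s^8 := by ring
        _ ≤ s^2 * (1/3:ℝ)^8 := mul_le_mul_of_nonneg_left h (sq_nonneg s)
        _ = s^2 * (1/6561) := by norm_num
    have p4 : 0 ≤ s^4 := by positivity
    have p5 : 0 ≤ s^5 := by positivity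
    have p7 : 0 ≤ s^7 := by positivity
    have p8 : 0 ≤ s^8 := by positivity
    have p11 : 0 ≤ s^11 := by positivity
    have p12 : 0 ≤ s^12 := by positivity
    linarith [hb2, hb3, hb6, hb9, hb10, hs0, hs3, p4, p5, p7, p8, p11, p12]
  have ha34 : (0:ℝ) < 2 + 58*s^2 + 640*s^3 + 1988*s^4 + 2816*s^5 + 1988*s^6 + 640*s^7
      + 58*s^8 + 2*s^10 := by positivity
  have hB34 : 0 < (2 + 58*s^2 + 640*s^3 + 1988*s^4 + 2816*s^5 + 1988*s^6 + 640*s^7 + 58*s^8 + 2*s^10)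
      + (2 - 136*s^2 - 512*s^3 - 756*s^4 - 512*s^5 - 136*s^6 + 2*s^8) * t := by
    have hR : (0:ℝ) < s^2 * (1 + s)^4 * (720 + 1728*s - 7776*s^2 - 5184*s^3 + 24624*s^4 + 3456*s^5 - 35136*s^6 + 3456*s^7 + 24624*s^8 - 5184*s^9 - 7776*s^10 + 1728*s^11 + 720*s^12) := by
      have h1 : (0:ℝ) < s^2 * (1 + s)^4 := by positivity
      exact mul_pos h1 hP
    have hk : ((2 + 58*s^2 + 640*s^3 + 1988*s^4 + 2816*s^5 + 1988*s^6 + 640*s^7 + 58*s^8 + 2*s^10) - (2 - 136*s^2 - 512*s^3 - 756*s^4 - 512*s^5 - 136*s^6 + 2*s^8) * t) *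
        ((2 + 58*s^2 + 640*s^3 + 1988*s^4 + 2816*s^5 + 1988*s^6 + 640*s^7 + 58*s^8 + 2*s^10) + (2 - 136*s^2 - 512*s^3 - 756*s^4 - 512*s^5 - 136*s^6 + 2*s^8) * t) =
        s^2 * (1 + s)^4 * (720 + 1728*s - 7776*s^2 - 5184*s^3 + 24624*s^4 + 3456*s^5 - 35136*s^6 + 3456*s^7 + 24624*s^8 - 5184*s^9 - 7776*s^10 + 1728*s^11 + 720*s^12) := by
      linear_combination (-(2 - 136*s^2 - 512*s^3 - 756*s^4 - 512*s^5 - 136*s^6 + 2*s^8)^2) * ht2'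
    exact aux_sum_pos _ _ _ ha34 hR hk
  -- B45
  have hB45 : 0 < 8*s + 40*s^2 - 24*s^3 - 184*s^4 - 104*s^5 + 120*s^6 + 120*s^7 + 24*s^8 := by
    have hb3 : s^3 ≤ s^2 * (1/3) := by nlinarith
    have hb4 : s^4 ≤ s^2 * (1/9) := by
      have h : s^2 ≤ (1/3:ℝ)^2 := pow_le_pow_left₀ hs0.le hs3.le 2
      calc s^4 = s^2 * s^2 := by ring
        _ ≤ s^2 * (1/3:ℝ)^2 := mul_le_mul_of_nonneg_left h (sq_nonneg s)
        _ = s^2 * (1/9) := by norm_num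
    have hb5 : s^5 ≤ s^2 * (1/27) := by
      have h : s^3 ≤ (1/3:ℝ)^3 := pow_le_pow_left₀ hs0.le hs3.le 3
      calc s^5 = s^2 * s^3 := by ring
        _ ≤ s^2 * (1/3:ℝ)^3 := mul_le_mul_of_nonneg_left h (sq_nonneg s)
        _ = s^2 * (1/27) := by norm_num
    have p6 : 0 ≤ s^6 := by positivity
    have p7 : 0 ≤ s^7 := by positivity
    have p8 : 0 ≤ s^8 := by positivity
    linarith [hb3, hb4, hb5, p6, p7, p8, hs0, hs3, sq_nonneg s]
  -- B56
  have hB56 : 0 < s - 6*s^2 + 8*s^3 + 6*s^4 - 9*s^5 := by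
    have : s - 6*s^2 + 8*s^3 + 6*s^4 - 9*s^5 = s * (1 - 3*s)^2 * (1 - s^2) := by ring
    rw [this]
    have h1 : (0:ℝ) < 1 - 3*s := by linarith
    have h2 : (0:ℝ) < 1 - s^2 := by nlinarith
    have h3 : (0:ℝ) < (1 - 3*s)^2 := by positivity
    positivity
  -- assemble
  refine ⟨?_, ?_, ?_, ?_, ?_, ?_⟩
  · unfold effX xmdf
    norm_num
  · have h0 : effX q (xmdf q) = 0 := by unfold effX xmdf; norm_num
    rw [h0, E2]
    positivity
  · rw [E2, E3, div_lt_div_iff₀ hd2 hd3]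
    have key : (4 + q ^ 2 - t) * (6 * q ^ 2 - (4 + q ^ 2 - t)) * (4 - 2 * q ^ 2)
        - q ^ 2 * (6 * q ^ 2 * (2 - q ^ 2 + t)) =
        (2 - 66*s^2 - 66*s^4 + 2*s^6) + (2 + 28*s^2 + 2*s^4) * t := by
      linear_combination ((130) + (-30)*t + (64)*s^2 + (-2)*s^2*t + (-2)*s^4 + (-62)*q^2
        + (2)*q^2*t + (2)*q^2*s^2 + (-2)*q^4) * hq2 + ((-4) + (2)*q^2) * ht2
    linarith [hB23]
  · rw [E3, E4, div_lt_div_iff₀ hd3 hd4]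
    have key : q ^ 2 * (4 - q ^ 2 + 4 * s) * (4 * s + 4 * s ^ 2 + q ^ 2)
          * (6 * q ^ 2 * (2 - q ^ 2 + t))
        - (4 + q ^ 2 - t) * (6 * q ^ 2 - (4 + q ^ 2 - t))
          * (4 * (1 + s) ^ 2 * (4 * (1 + s) ^ 2 - q ^ 2 * (4 - q ^ 2 + 4 * s))) =
        (2 + 58*s^2 + 640*s^3 + 1988*s^4 + 2816*s^5 + 1988*s^6 + 640*s^7 + 58*s^8 + 2*s^10)
        + (2 - 136*s^2 - 512*s^3 - 756*s^4 - 512*s^5 - 136*s^6 + 2*s^8) * t := by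
      linear_combination ((-510) + (130)*t + (-2048)*s + (512)*s*t + (-3524)*s^2 + (762)*s^2*t
        + (-3456)*s^3 + (512)*s^3*t + (-2048)*s^4 + (134)*s^4*t + (-640)*s^5 + (-60)*s^6
        + (-2)*s^6*t + (-2)*s^8 + (514)*q^2 + (-62)*q^2*t + (1536)*q^2*s + (-128)*q^2*s*t
        + (1598)*q^2*s^2 + (-68)*q^2*s^2*t + (640)*q^2*s^3 + (62)*q^2*s^4 + (2)*q^2*s^4*t
        + (2)*q^2*s^6 + (-62)*q^4 + (34)*q^4*t + (-192)*q^4*s + (32)*q^4*s*t + (-128)*q^4*s^2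
        + (-2)*q^4*s^2*t + (-2)*q^4*s^4 + (-46)*q^6 + (-6)*q^6*t + (-32)*q^6*s + (2)*q^6*s^2
        + (6)*q^8) * hq2
        + ((16) + (64)*s + (96)*s^2 + (64)*s^3 + (16)*s^4 + (-16)*q^2 + (-48)*q^2*s
        + (-48)*q^2*s^2 + (-16)*q^2*s^3 + (4)*q^4 + (8)*q^4*s + (4)*q^4*s^2) * ht2
    linarith [hB34]
  · rw [E4, E5, div_lt_div_iff₀ hd4 hd5]
    have key : 3 * q ^ 2 * (4 * (1 + s) ^ 2 * (4 * (1 + s) ^ 2 - q ^ 2 * (4 - q ^ 2 + 4 * s)))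
        - q ^ 2 * (4 - q ^ 2 + 4 * s) * (4 * s + 4 * s ^ 2 + q ^ 2) * (16 - 12 * q ^ 2) =
        8*s + 40*s^2 - 24*s^3 - 184*s^4 - 104*s^5 + 120*s^6 + 120*s^7 + 24*s^8 := by
      linear_combination ((8)*s + (40)*s^2 + (-16)*s^3 + (-144)*s^4 + (-120)*s^5 + (-24)*s^6
        + (-48)*q^2 + (72)*q^2*s + (216)*q^2*s^2 + (120)*q^2*s^3 + (24)*q^2*s^4 + (64)*q^4
        + (24)*q^4*s + (-24)*q^4*s^2 + (-12)*q^6) * hq2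
    linarith [hB45]
  · rw [E5, E6, div_lt_div_iff₀ hd5 hd6]
    have key : q ^ 2 * s * (16 - 12 * q ^ 2)
        - 3 * q ^ 2 * ((1 + s) * (1 + s - q ^ 2)) =
        s - 6*s^2 + 8*s^3 + 6*s^4 - 9*s^5 := by
      linear_combination ((1)*s + (-6)*s^2 + (9)*s^3 + (3)*q^2 + (-9)*q^2*s) * hq2
    linarith [hB56]
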